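/- Let V be a horizontal vertex set in an augmented tree. If the horizontal unit ball B_hor(v,1) is contained in V, then for every letter x ∈ X, the cone C_{xv} is contained in the umbra U(V). -/

import Mathlib

/-- An augmented tree on the words `X*`: the tree of words (with vertical edges from
`v` to `xv`) augmented by a set of horizontal edges joining words of equal length, such
that the endpoints of a horizontal edge have truncations (deleting the first letter)
which either coincide or are again joined by a horizontal edge. -/
structure AugmentedTree (X : Type*) where
  horiz : List X → List X → Prop
  horiz_symm : ∀ u v, horiz u v → horiz v u
  horiz_irrefl : ∀ u, ¬ horiz u u
  horiz_length : ∀ u v, horiz u v → u.length = v.length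
  horiz_push : ∀ (x y : X) (u v : List X), horiz (x :: u) (y :: v) → u = v ∨ horiz u v

/-- The graph of an augmented tree: vertical tree edges together with horizontal edges. -/
def AugmentedTree.graph {X : Type*} (T : AugmentedTree X) : SimpleGraph (List X) where
  Adj u v := T.horiz u v ∨ (∃ x : X, v = x :: u) ∨ (∃ x : X, u = x :: v)
  symm := by
    constructor
    intro u v h
    rcases h with h | ⟨x, rfl⟩ | ⟨x, rfl⟩
    · exact Or.inl (T.horiz_symm u v h)
    · exact Or.inr (Or.inr ⟨x, rfl⟩)
    · exact Or.inr (Or.inl ⟨x, rfl⟩)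
  loopless := by
    constructor
    intro u h
    rcases h with h | ⟨x, hx⟩ | ⟨x, hx⟩
    · exact T.horiz_irrefl u h
    · have := congrArg List.length hx; simp at this
    · have := congrArg List.length hx; simp at this

/-- The cone over a word `v`: the set of words ending in `v`. -/
def Cone {X : Type*} (v : List X) : Set (List X) := {u | ∃ w : List X, u = w ++ v}

/-- The vertex set of the shadow `S(V)`: the union of the cones over elements of `V`. -/
def shadowSet {X : Type*} (V : Set (List X)) : Set (List X) := ⋃ v ∈ V, Cone v

/-- The umbra `U(V)`: the set of vertices of the shadow `S(V)` at distance greater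
than 1 from the complement of `S(V)`. -/
def umbraSet {X : Type*} (T : AugmentedTree X) (V : Set (List X)) : Set (List X) :=
  {u | u ∈ shadowSet V ∧ ∀ y : List X, y ∉ shadowSet V → 2 ≤ T.graph.dist u y}

private lemma AugmentedTree.reach_nil {X : Type*} (T : AugmentedTree X) :
    ∀ u : List X, T.graph.Reachable u [] := by
  intro u
  induction u with
  | nil => exact SimpleGraph.Reachable.refl _
  | cons a u ih =>
    exact (SimpleGraph.Adj.reachable (Or.inr (Or.inr ⟨a, rfl⟩))).trans ih

private lemma AugmentedTree.horiz_iter {X : Type*} (T : AugmentedTree X) (v : List X) :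
    ∀ (w y : List X), T.horiz (w ++ v) y →
      ∃ p t, y = p ++ t ∧ t.length = v.length ∧ (t = v ∨ T.horiz v t) := by
  intro w
  induction w with
  | nil =>
    intro y h
    rw [List.nil_append] at h
    exact ⟨[], y, rfl, (T.horiz_length _ _ h).symm, Or.inr h⟩
  | cons a w ih =>
    intro y h
    have hlen := T.horiz_length _ _ h
    match y with
    | [] => simp at hlen
    | b :: y' =>
      rcases T.horiz_push a b _ _ h with heq | hh
      · exact ⟨b :: w, v, by rw [← heq]; rfl, rfl, Or.inl rfl⟩
      · obtain ⟨p, t, rfl, hlt, ht⟩ := ih y' hh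
        exact ⟨b :: p, t, rfl, hlt, ht⟩

/-- Unit ball inside implies umbra is nonempty: if the horizontal unit ball
`B_hor(v, 1)` is contained in the horizontal vertex set `V`, then for every letter
`x ∈ X` the cone `C_{xv}` is contained in the umbra `U(V)`. -/
theorem stmt13 {X : Type*} (T : AugmentedTree X) (n : ℕ) (V : Set (List X))
    (hV : ∀ v ∈ V, v.length = n) (v : List X) (hv : v.length = n)
    (hball : ∀ w : List X, w.length = v.length → T.graph.dist v w ≤ 1 → w ∈ V) :
    ∀ x : X, Cone (x :: v) ⊆ umbraSet T V := by
  intro x u hu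
  obtain ⟨w, rfl⟩ := hu
  have hvV : v ∈ V := hball v rfl (by rw [SimpleGraph.dist_self]; omega)
  have hshadow : ∀ z t : List X, t ∈ V → z ++ t ∈ shadowSet V := by
    intro z t ht
    exact Set.mem_biUnion ht ⟨z, rfl⟩
  have hu : w ++ x :: v ∈ shadowSet V := by
    have : w ++ x :: v = (w ++ [x]) ++ v := by rw [List.append_assoc]; rfl
    rw [this]; exact hshadow _ _ hvV
  refine ⟨hu, fun y hy => ?_⟩
  by_contra hlt
  push_neg at hlt
  interval_cases h : T.graph.dist (w ++ x :: v) y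
  · -- dist = 0
    have hr : T.graph.Reachable (w ++ x :: v) y :=
      (T.reach_nil _).trans (T.reach_nil y).symm
    have := (hr.dist_eq_zero_iff).mp h
    exact hy (this ▸ hu)
  · -- dist = 1 : adjacent
    have hadj := SimpleGraph.dist_eq_one_iff_adj.mp h
    rcases hadj with hh | ⟨a, rfl⟩ | hc
    · -- horizontal
      have : T.horiz ((w ++ [x]) ++ v) y := by simpa using hh
      obtain ⟨p, t, rfl, hlt', ht⟩ := T.horiz_iter v _ _ this
      have htV : t ∈ V := by
        apply hball t hlt'
        rcases ht with rfl | hh'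
        · rw [SimpleGraph.dist_self]; omega
        · exact SimpleGraph.dist_le (SimpleGraph.Walk.cons (show T.graph.Adj v t from Or.inl hh') SimpleGraph.Walk.nil)
      exact hy (hshadow _ _ htV)
    · -- y = a :: (w ++ x :: v)
      have : a :: (w ++ x :: v) = (a :: w ++ [x]) ++ v := by simp
      exact hy (this ▸ hshadow _ _ hvV)
    · -- w ++ x :: v = a :: y
      obtain ⟨a, ha⟩ := hc
      match w, ha with
      | [], ha =>
        have : y = v := by injection ha with _ h2; exact h2.symm
        exact hy (this ▸ hshadow [] v hvV)
      | b :: w', ha =>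
        have : y = (w' ++ [x]) ++ v := by injection ha with _ h2; simp [← h2]
        exact hy (this ▸ hshadow _ _ hvV)
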